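/- Let G be a graph, M a feedback vertex set, T a subtree of G − M, and suppose S is a feedback vertex set of G containing at least one vertex in each of d_M(T) + b(T) given pairwise vertex-disjoint paths inside T. Then S' = (S \ T) ∪ (N(T) ∩ M) ∪ ∂(T) is a feedback vertex set of G of size at most |S|. -/

import Mathlib

open SimpleGraph Finset

/-- `S` is a feedback vertex set of `G`: removing `S` leaves an acyclic graph. -/
def IsFVS {V : Type*} (G : SimpleGraph V) (S : Set V) : Prop :=
  (G.induce Sᶜ).IsAcyclic

private def toInduceWalk {V : Type*} {G : SimpleGraph V} {s : Set V} :
    ∀ {u v : V} (p : G.Walk u v) (_ : ∀ x ∈ p.support, x ∈ s),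
      (G.induce s).Walk ⟨u, by exact ‹∀ x ∈ p.support, x ∈ s› u p.start_mem_support⟩
        ⟨v, by exact ‹∀ x ∈ p.support, x ∈ s› v p.end_mem_support⟩
  | u, _, SimpleGraph.Walk.nil, _ => SimpleGraph.Walk.nil
  | u, v, SimpleGraph.Walk.cons h q, hs =>
      SimpleGraph.Walk.cons (by exact h) (toInduceWalk q (fun x hx => hs x (by simp [hx])))

private lemma toInduceWalk_map {V : Type*} {G : SimpleGraph V} {s : Set V} :
    ∀ {u v : V} (p : G.Walk u v) (hs : ∀ x ∈ p.support, x ∈ s),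
      (toInduceWalk p hs).map (SimpleGraph.Embedding.induce (G := G) s).toHom = p
  | u, _, SimpleGraph.Walk.nil, _ => rfl
  | u, v, SimpleGraph.Walk.cons h q, hs => by
      simp [toInduceWalk, SimpleGraph.Walk.map_cons, toInduceWalk_map q]
      exact congrArg (SimpleGraph.Walk.cons h) (toInduceWalk_map q _)

private lemma cycle_in_induce {V : Type*} {G : SimpleGraph V} {s : Set V} {u : V}
    {p : G.Walk u u} (hc : p.IsCycle) (hs : ∀ x ∈ p.support, x ∈ s) :
    ¬ (G.induce s).IsAcyclic := by
  intro hac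
  exact hac (toInduceWalk p hs)
    ((SimpleGraph.Walk.map_isCycle_iff_of_injective
      (SimpleGraph.Embedding.induce (G := G) s).injective).mp (by rwa [toInduceWalk_map p hs]))

private lemma crossing {V : Type*} {G : SimpleGraph V} {s : Set V} :
    ∀ {u v : V} (p : G.Walk u v), u ∈ s → v ∉ s →
      ∃ a b, G.Adj a b ∧ a ∈ p.support ∧ b ∈ p.support ∧ a ∈ s ∧ b ∉ s
  | u, _, SimpleGraph.Walk.nil, hu, hv => absurd hu hv
  | u, v, SimpleGraph.Walk.cons (v := x) h q, hu, hv => by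
      by_cases hx : x ∈ s
      · obtain ⟨a, b, hab, ha, hb, has, hbs⟩ := crossing q hx hv
        exact ⟨a, b, hab, by simp [ha], by simp [hb], has, hbs⟩
      · exact ⟨u, x, h, by simp, by simp, hu, hx⟩

private lemma crossing_closed {V : Type*} [DecidableEq V] {G : SimpleGraph V} {s : Set V} {u : V}
    (p : G.Walk u u) (hx : ∃ x ∈ p.support, x ∈ s) (hy : ∃ y ∈ p.support, y ∉ s) :
    ∃ a b, G.Adj a b ∧ a ∈ p.support ∧ b ∈ p.support ∧ a ∈ s ∧ b ∉ s := by
  obtain ⟨x, hxs, hxT⟩ := hx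
  obtain ⟨y, hys, hyT⟩ := hy
  by_cases hu : u ∈ s
  · obtain ⟨v, w, h1, h2, h3, h4, h5⟩ := crossing (p.takeUntil y hys) hu hyT
    exact ⟨v, w, h1, p.support_takeUntil_subset hys h2,
      p.support_takeUntil_subset hys h3, h4, h5⟩
  · obtain ⟨v, w, h1, h2, h3, h4, h5⟩ := crossing (p.dropUntil x hxs) hxT hu
    exact ⟨v, w, h1, p.support_dropUntil_subset hxs h2,
      p.support_dropUntil_subset hxs h3, h4, h5⟩

theorem stmt9 {V : Type*} [Fintype V] [DecidableEq V] (G : SimpleGraph V) [DecidableRel G.Adj]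
    (M : Finset V) (hM : IsFVS G ↑M)
    (T : Finset V) (hTM : Disjoint T M) (hTree : (G.induce (T : Set V)).IsTree)
    (a c : Fin ((M.filter (fun x => ∃ v ∈ T, G.Adj x v)).card +
        (T.filter (fun v => ∃ w, w ∉ M ∧ w ∉ T ∧ G.Adj v w)).card) → V)
    (p : ∀ i, G.Walk (a i) (c i))
    (hp : ∀ i, (p i).IsPath) (hlen : ∀ i, 1 ≤ (p i).length)
    (hsupp : ∀ i, ∀ x ∈ (p i).support, x ∈ T)
    (hpd : ∀ i j, i ≠ j → ∀ x ∈ (p i).support, x ∉ (p j).support)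
    (S : Finset V) (hS : IsFVS G ↑S)
    (hhit : ∀ i, ∃ v ∈ S, v ∈ (p i).support) :
    IsFVS G ↑((S \ T) ∪ M.filter (fun x => ∃ v ∈ T, G.Adj x v) ∪
        T.filter (fun v => ∃ w, w ∉ M ∧ w ∉ T ∧ G.Adj v w)) ∧
    ((S \ T) ∪ M.filter (fun x => ∃ v ∈ T, G.Adj x v) ∪
        T.filter (fun v => ∃ w, w ∉ M ∧ w ∉ T ∧ G.Adj v w)).card ≤ S.card := by
  set D := M.filter (fun x => ∃ v ∈ T, G.Adj x v) with hD
  set B := T.filter (fun v => ∃ w, w ∉ M ∧ w ∉ T ∧ G.Adj v w) with hB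
  set S' : Finset V := (S \ T) ∪ D ∪ B with hS'
  constructor
  · -- FVS property
    intro u q hq
    -- map cycle to G
    set s : Set V := (↑S' : Set V)ᶜ with hs
    let cw := q.map (SimpleGraph.Embedding.induce (G := G) s).toHom
    have hcw : cw.IsCycle := hq.map (SimpleGraph.Embedding.induce (G := G) s).injective
    have hcsupp : ∀ x ∈ cw.support, x ∉ S' := by
      intro x hx
      simp only [cw, SimpleGraph.Walk.support_map, List.mem_map] at hx
      obtain ⟨y, _, rfl⟩ := hx
      exact y.2
    have hmem : ∀ x ∈ cw.support, x ∉ S \ T ∧ x ∉ D ∧ x ∉ B := by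
      intro x hx
      have := hcsupp x hx
      simp only [hS', Finset.mem_union, not_or] at this
      exact ⟨this.1.1, this.1.2, this.2⟩
    by_cases hex : ∃ x ∈ cw.support, x ∈ T
    · by_cases hout : ∃ y ∈ cw.support, y ∉ T
      · -- crossing edge
        obtain ⟨x, hxs, hxT⟩ := hex
        obtain ⟨y, hys, hyT⟩ := hout
        have hcross : ∃ v w, G.Adj v w ∧ v ∈ cw.support ∧ w ∈ cw.support ∧
            v ∈ (↑T : Set V) ∧ w ∉ (↑T : Set V) :=
          crossing_closed cw ⟨x, hxs, by simpa using hxT⟩ ⟨y, hys, by simpa using hyT⟩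
        obtain ⟨v, w, hadj, hvs, hws, hvT, hwT⟩ := hcross
        by_cases hwM : w ∈ M
        · have : w ∈ D := by
            rw [hD, Finset.mem_filter]
            exact ⟨hwM, v, by simpa using hvT, hadj.symm⟩
          exact (hmem w hws).2.1 this
        · have : v ∈ B := by
            rw [hB, Finset.mem_filter]
            exact ⟨by simpa using hvT, w, hwM, by simpa using hwT, hadj⟩
          exact (hmem v hvs).2.2 this
      · -- cycle entirely in T
        push_neg at hout
        exact cycle_in_induce hcw (fun x hx => by simpa using hout x hx) hTree.2
    · -- cycle avoids T, hence avoids S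
      push_neg at hex
      refine cycle_in_induce hcw ?_ hS
      intro x hx
      have h1 := (hmem x hx).1
      have h2 := hex x hx
      simp only [Finset.mem_sdiff, not_and, not_not] at h1
      simp only [Set.mem_compl_iff, Finset.coe_sort_coe, Finset.mem_coe]
      intro hxS
      exact h2 (h1 hxS)
  · -- cardinality
    have key : D.card + B.card ≤ (S ∩ T).card := by
      have hn : D.card + B.card = Fintype.card (Fin (D.card + B.card)) := by simp
      rw [hn]
      classical
      choose f hfS hfsupp using hhit
      have hfT : ∀ i, f i ∈ S ∩ T :=
        fun i => Finset.mem_inter.2 ⟨hfS i, hsupp i (f i) (hfsupp i)⟩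
      have hinj : Function.Injective f := by
        intro i j hij
        by_contra hne
        exact hpd i j hne (f i) (hfsupp i) (hij ▸ hfsupp j)
      calc Fintype.card (Fin (D.card + B.card)) ≤ Fintype.card {x // x ∈ S ∩ T} :=
            Fintype.card_le_of_injective (fun i => ⟨f i, hfT i⟩)
              (fun i j h => hinj (congrArg Subtype.val h))
        _ = (S ∩ T).card := Fintype.card_coe _
    calc S'.card ≤ (S \ T).card + D.card + B.card := by
          refine le_trans (Finset.card_union_le _ _) ?_
          exact Nat.add_le_add_right (Finset.card_union_le _ _) _
      _ ≤ (S \ T).card + (S ∩ T).card := by omega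
      _ = S.card := Finset.card_sdiff_add_card_inter S T
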